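/- If there exists a feasible schedule of the DAG on m processors with makespan at most T, then for every subinterval θ ⊆ [0,T), m·|θ| ≥ R(θ), where R(θ) is the minimum density: the sum over all tasks u of the minimum possible overlap of u's execution interval with θ, given that u must end no earlier than mnEnd(u) and start no later than mxStart(u). -/

import Mathlib

/-- If there is a feasible schedule on `m` processors with makespan at most `T`, then for
every subinterval `θ = [ti, tj) ⊆ [0, T)` we have `R(θ) ≤ m * |θ|`, where `R(θ)` is the
minimum density: the sum over all tasks `u` of the minimum possible overlap of `u`'s
execution interval with `θ`, given that `u` ends no earlier than `mnEnd u` and starts no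
later than `mxStart u`. -/
theorem stmt_10 {V : Type*} [Fintype V] [DecidableEq V]
    (E : V → V → Prop) [DecidableRel E]
    (hacyc : ∀ v, ¬ Relation.TransGen E v v)
    (c : V → ℝ) (hpos : ∀ v, 0 < c v)
    (T : ℝ) (mnEnd mxStart : V → ℝ)
    (hrecE : ∀ u, mnEnd u = c u +
      (insert (0 : ℝ) ((Finset.univ.filter fun v => E v u).image mnEnd)).max'
        (Finset.insert_nonempty _ _))
    (hrecS : ∀ u, mxStart u =
      (insert (T - c u)
        ((Finset.univ.filter fun v => E u v).image (fun v => mxStart v - c u))).min'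
        (Finset.insert_nonempty _ _))
    (m : ℕ) (τ : V → ℝ) (proc : V → Fin m)
    (hstart : ∀ v, 0 ≤ τ v)
    (hdisj : ∀ u v, u ≠ v → proc u = proc v → τ u + c u ≤ τ v ∨ τ v + c v ≤ τ u)
    (hprec : ∀ u v, E u v → τ u + c u ≤ τ v)
    (hmk : ∀ v, τ v + c v ≤ T)
    (ti tj : ℝ) (h0 : 0 ≤ ti) (hij : ti ≤ tj) (hjT : tj ≤ T) :
    (∑ u, max 0 (min (min (mnEnd u - ti) (c u)) (min (tj - mxStart u) (tj - ti))))
      ≤ (m : ℝ) * (tj - ti) := by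
  -- Well-foundedness of the precedence relation and its reverse
  haveI : IsTrans V (Relation.TransGen E) := inferInstance
  haveI : IsIrrefl V (Relation.TransGen E) := ⟨hacyc⟩
  have wf : WellFounded (Relation.TransGen E) :=
    Finite.wellFounded_of_trans_of_irrefl _
  haveI : IsTrans V (Relation.TransGen (flip E)) := inferInstance
  haveI : IsIrrefl V (Relation.TransGen (flip E)) :=
    ⟨fun v hv => hacyc v ((Relation.transGen_swap).mp hv)⟩
  have wf' : WellFounded (Relation.TransGen (flip E)) :=
    Finite.wellFounded_of_trans_of_irrefl _
  -- mnEnd is a lower bound on completion time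
  have h1 : ∀ u, mnEnd u ≤ τ u + c u := by
    intro u
    induction u using wf.induction with
    | _ u ih =>
      rw [hrecE u]
      have hb : ∀ x ∈ insert (0 : ℝ)
          ((Finset.univ.filter fun v => E v u).image mnEnd), x ≤ τ u := by
        intro x hx
        simp only [Finset.mem_insert, Finset.mem_image, Finset.mem_filter,
          Finset.mem_univ, true_and] at hx
        rcases hx with rfl | ⟨v, hv, rfl⟩
        · exact hstart u
        · exact le_trans (ih v (Relation.TransGen.single hv))
            (hprec v u hv)
      have := Finset.max'_le _ (Finset.insert_nonempty _ _) _ hb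
      linarith
  -- mxStart is an upper bound on start time
  have h2 : ∀ u, τ u ≤ mxStart u := by
    intro u
    induction u using wf'.induction with
    | _ u ih =>
      rw [hrecS u]
      apply Finset.le_min'
      intro x hx
      simp only [Finset.mem_insert, Finset.mem_image, Finset.mem_filter,
        Finset.mem_univ, true_and] at hx
      rcases hx with rfl | ⟨v, hv, rfl⟩
      · linarith [hmk u]
      · have := ih v (Relation.TransGen.single hv)
        have := hprec u v hv
        linarith
  -- actual overlap of task u with [ti, tj)
  set a : V → ℝ := fun u => max (τ u) ti with ha
  set b : V → ℝ := fun u => min (τ u + c u) tj with hb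
  -- pointwise: minimum overlap ≤ actual overlap
  have hpt : ∀ u, max 0 (min (min (mnEnd u - ti) (c u)) (min (tj - mxStart u) (tj - ti)))
      ≤ max 0 (b u - a u) := by
    intro u
    apply max_le_max le_rfl
    have q1 : min (min (mnEnd u - ti) (c u)) (min (tj - mxStart u) (tj - ti)) ≤ mnEnd u - ti :=
      le_trans (min_le_left _ _) (min_le_left _ _)
    have q2 : min (min (mnEnd u - ti) (c u)) (min (tj - mxStart u) (tj - ti)) ≤ c u :=
      le_trans (min_le_left _ _) (min_le_right _ _)
    have q3 : min (min (mnEnd u - ti) (c u)) (min (tj - mxStart u) (tj - ti)) ≤ tj - mxStart u :=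
      le_trans (min_le_right _ _) (min_le_left _ _)
    have q4 : min (min (mnEnd u - ti) (c u)) (min (tj - mxStart u) (tj - ti)) ≤ tj - ti :=
      le_trans (min_le_right _ _) (min_le_right _ _)
    have e1 := h1 u
    have e2 := h2 u
    rcases min_cases (τ u + c u) tj with ⟨he, _⟩ | ⟨he, _⟩ <;>
      rcases max_cases (τ u) ti with ⟨hf, _⟩ | ⟨hf, _⟩ <;>
      simp only [ha, hb, he, hf] <;> linarith
  calc (∑ u, max 0 (min (min (mnEnd u - ti) (c u)) (min (tj - mxStart u) (tj - ti))))
      ≤ ∑ u, max 0 (b u - a u) := Finset.sum_le_sum fun u _ => hpt u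
    _ ≤ (m : ℝ) * (tj - ti) := by
        -- group by processor
        rw [← Finset.sum_fiberwise Finset.univ proc (fun u => max 0 (b u - a u))]
        have hfib : ∀ p : Fin m,
            (∑ u ∈ Finset.univ.filter fun u => proc u = p, max 0 (b u - a u)) ≤ tj - ti := by
          intro p
          set s := Finset.univ.filter fun u => proc u = p with hs
          -- measure-theoretic argument
          have hmeas : ∀ u ∈ s, MeasurableSet (Set.Ico (a u) (b u)) :=
            fun u _ => measurableSet_Ico
          have hdisj' : (↑s : Set V).PairwiseDisjoint fun u => Set.Ico (a u) (b u) := by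
            intro u hu v hv huv
            simp only [hs, Finset.coe_filter, Set.mem_setOf_eq, Finset.mem_univ,
              true_and] at hu hv
            have := hdisj u v huv (hu.trans hv.symm)
            rw [Function.onFun, Set.Ico_disjoint_Ico]
            rcases this with h | h
            · calc min (b u) (b v) ≤ b u := min_le_left _ _
                _ ≤ τ u + c u := min_le_left _ _
                _ ≤ τ v := h
                _ ≤ max (a u) (a v) := le_trans (le_max_left _ _) (le_max_right _ _)
            · calc min (b u) (b v) ≤ b v := min_le_right _ _
                _ ≤ τ v + c v := min_le_left _ _
                _ ≤ τ u := h
                _ ≤ max (a u) (a v) := le_trans (le_max_left _ _) (le_max_left _ _)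
          have hsub : (⋃ u ∈ s, Set.Ico (a u) (b u)) ⊆ Set.Ico ti tj := by
            intro x hx
            simp only [Set.mem_iUnion] at hx
            obtain ⟨u, _, hx⟩ := hx
            exact Set.Ico_subset_Ico (le_max_right _ _) (min_le_right _ _) hx
          have key : ∑ u ∈ s, MeasureTheory.volume (Set.Ico (a u) (b u))
              ≤ ENNReal.ofReal (tj - ti) := by
            rw [← MeasureTheory.measure_biUnion_finset hdisj' hmeas]
            calc MeasureTheory.volume (⋃ u ∈ s, Set.Ico (a u) (b u))
                ≤ MeasureTheory.volume (Set.Ico ti tj) :=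
                  MeasureTheory.measure_mono hsub
              _ = ENNReal.ofReal (tj - ti) := Real.volume_Ico
          have hfin : ∑ u ∈ s, MeasureTheory.volume (Set.Ico (a u) (b u)) ≠ ⊤ := by
            exact ne_of_lt (lt_of_le_of_lt key (ENNReal.ofReal_lt_top))
          have := ENNReal.toReal_le_toReal hfin (ENNReal.ofReal_ne_top) |>.mpr key
          rw [ENNReal.toReal_ofReal (by linarith)] at this
          refine le_trans (le_of_eq ?_) this
          rw [ENNReal.toReal_sum (fun u _ => by
            rw [Real.volume_Ico]; exact ENNReal.ofReal_ne_top)]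
          refine Finset.sum_congr rfl fun u _ => ?_
          rw [Real.volume_Ico, ENNReal.toReal_ofReal', max_comm]
        calc (∑ p : Fin m, ∑ u ∈ Finset.univ.filter fun u => proc u = p, max 0 (b u - a u))
            ≤ ∑ _p : Fin m, (tj - ti) := Finset.sum_le_sum fun p _ => hfib p
          _ = (m : ℝ) * (tj - ti) := by simp [Finset.sum_const, mul_comm]; ring
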